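/- Let X be a random variable on a finite alphabet 𝒳 with n = |𝒳| ≥ 2, let Z = (1/(n-1))·Σ_{x≠x'} √(P_X(x)·P_X(x')) be the (unconditional) Bhattacharyya parameter, and let ε = 1 − max_x P_X(x). If ε ≤ (n-1)/n, then Z ≤ ((n-2)/(n-1))·ε + 2·√(ε(1-ε)/(n-1)). -/

import Mathlib

theorem stmt_19 (n : ℕ) (hn : 2 ≤ n) (P : Fin n → ℝ) (hP : ∀ i, 0 ≤ P i)
    (hsum : ∑ i, P i = 1) (Z ε : ℝ)
    (hZ : Z = (1 / ((n : ℝ) - 1))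
        * ∑ x, ∑ y, if x ≠ y then Real.sqrt (P x * P y) else 0)
    (hε : ε = 1 - ⨆ i, P i) (hεu : ε ≤ ((n : ℝ) - 1) / n) :
    Z ≤ (((n : ℝ) - 2) / ((n : ℝ) - 1)) * ε
        + 2 * Real.sqrt (ε * (1 - ε) / ((n : ℝ) - 1)) := by
  have hn2 : (2:ℝ) ≤ (n:ℝ) := by exact_mod_cast hn
  have hn1pos : (0:ℝ) < (n:ℝ) - 1 := by linarith
  have : Nonempty (Fin n) := ⟨⟨0, by omega⟩⟩
  obtain ⟨i₀, hi₀⟩ := Finite.exists_max P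
  have hm : (⨆ i, P i) = P i₀ :=
    le_antisymm (ciSup_le hi₀) (le_ciSup (Set.Finite.bddAbove (Set.finite_range P)) i₀)
  set s : Finset (Fin n) := Finset.univ.erase i₀ with hs
  have hsplit : P i₀ + ∑ i ∈ s, P i = 1 := by
    rw [hs, Finset.add_sum_erase Finset.univ P (Finset.mem_univ i₀), hsum]
  have hεeq : ε = ∑ i ∈ s, P i := by rw [hε, hm]; linarith
  have hε0 : 0 ≤ ε := hεeq ▸ Finset.sum_nonneg fun i _ => hP i
  have h1ε : 1 - ε = P i₀ := by rw [hε, hm]; ring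
  have h1ε0 : 0 ≤ 1 - ε := h1ε ▸ hP i₀
  set S := ∑ i, Real.sqrt (P i) with hSdef
  have hSsum : (∑ x, ∑ y, if x ≠ y then Real.sqrt (P x * P y) else 0) = S^2 - 1 := by
    have key : ∀ x : Fin n, (∑ y, if x ≠ y then Real.sqrt (P x * P y) else 0)
        = Real.sqrt (P x) * S - P x := by
      intro x
      have h1 : ∀ y : Fin n, (if x ≠ y then Real.sqrt (P x * P y) else 0)
          = Real.sqrt (P x) * Real.sqrt (P y)
            - (if x = y then Real.sqrt (P x) * Real.sqrt (P y) else 0) := by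
        intro y
        by_cases h : x = y
        · simp [h]
        · simp [h, Real.sqrt_mul (hP x)]
      rw [Finset.sum_congr rfl fun y _ => h1 y, Finset.sum_sub_distrib,
        Finset.sum_ite_eq Finset.univ x (fun y => Real.sqrt (P x) * Real.sqrt (P y))]
      simp [← Finset.mul_sum, Real.mul_self_sqrt (hP x), hSdef]
    rw [Finset.sum_congr rfl fun x _ => key x, Finset.sum_sub_distrib, ← Finset.sum_mul,
      hsum, ← hSdef]
    ring
  have hcard : (s.card : ℝ) = (n:ℝ) - 1 := by
    rw [hs, Finset.card_erase_of_mem (Finset.mem_univ i₀), Finset.card_univ, Fintype.card_fin]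
    have : 1 ≤ n := by omega
    push_cast [Nat.cast_sub this]
    ring
  have hCS : (∑ i ∈ s, Real.sqrt (P i))^2 ≤ ((n:ℝ) - 1) * ε := by
    calc (∑ i ∈ s, Real.sqrt (P i))^2 ≤ (s.card : ℝ) * ∑ i ∈ s, (Real.sqrt (P i))^2 := by
          have h := sq_sum_le_card_mul_sum_sq (s := s) (f := fun i => Real.sqrt (P i))
          exact_mod_cast h
      _ = ((n:ℝ) - 1) * ε := by
          rw [hcard, hεeq]
          congr 1
          exact Finset.sum_congr rfl fun i _ => Real.sq_sqrt (hP i)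
  have hsum_s_nonneg : 0 ≤ ∑ i ∈ s, Real.sqrt (P i) :=
    Finset.sum_nonneg fun i _ => Real.sqrt_nonneg _
  have hCS' : ∑ i ∈ s, Real.sqrt (P i) ≤ Real.sqrt (((n:ℝ) - 1) * ε) := by
    nlinarith [Real.sq_sqrt (show (0:ℝ) ≤ ((n:ℝ)-1)*ε by positivity),
      Real.sqrt_nonneg (((n:ℝ)-1)*ε), hCS, hsum_s_nonneg]
  have hSle : S ≤ Real.sqrt (1 - ε) + Real.sqrt (((n:ℝ) - 1) * ε) := by
    have : S = Real.sqrt (P i₀) + ∑ i ∈ s, Real.sqrt (P i) :=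
      (Finset.add_sum_erase Finset.univ (fun i => Real.sqrt (P i)) (Finset.mem_univ i₀)).symm
    rw [this, h1ε]
    linarith
  have hS0 : 0 ≤ S := Finset.sum_nonneg fun i _ => Real.sqrt_nonneg _
  have hsq : S^2 ≤ (1 - ε) + ((n:ℝ) - 1) * ε
      + 2 * (Real.sqrt (1 - ε) * Real.sqrt (((n:ℝ) - 1) * ε)) := by
    have h2 : S^2 ≤ (Real.sqrt (1 - ε) + Real.sqrt (((n:ℝ) - 1) * ε))^2 := by
      apply pow_le_pow_left₀ hS0 hSle
    calc S^2 ≤ (Real.sqrt (1 - ε) + Real.sqrt (((n:ℝ) - 1) * ε))^2 := h2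
      _ = (Real.sqrt (1-ε))^2 + (Real.sqrt (((n:ℝ)-1)*ε))^2
          + 2 * (Real.sqrt (1-ε) * Real.sqrt (((n:ℝ)-1)*ε)) := by ring
      _ = (1 - ε) + ((n:ℝ) - 1) * ε
          + 2 * (Real.sqrt (1-ε) * Real.sqrt (((n:ℝ)-1)*ε)) := by
          rw [Real.sq_sqrt h1ε0, Real.sq_sqrt (by positivity)]
  have hsqrt_eq : Real.sqrt (1-ε) * Real.sqrt (((n:ℝ)-1)*ε)
      = ((n:ℝ) - 1) * Real.sqrt (ε * (1 - ε) / ((n:ℝ) - 1)) := by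
    rw [← Real.sqrt_mul h1ε0, show ((n:ℝ)-1) = Real.sqrt (((n:ℝ)-1)^2) from
      (Real.sqrt_sq hn1pos.le).symm, ← Real.sqrt_mul (by positivity)]
    congr 1
    rw [Real.sqrt_sq hn1pos.le]
    field_simp
  rw [hsqrt_eq] at hsq
  rw [hZ, hSsum, one_div, inv_mul_eq_div, div_le_iff₀ hn1pos]
  have h : (((n:ℝ) - 2) / ((n:ℝ) - 1) * ε + 2 * Real.sqrt (ε * (1 - ε) / ((n:ℝ) - 1)))
      * ((n:ℝ) - 1) = ((n:ℝ) - 2) * ε + 2 * (((n:ℝ)-1) * Real.sqrt (ε * (1 - ε) / ((n:ℝ) - 1))) := by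
    field_simp
  rw [h]
  linarith [hsq]
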